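/- Let n ≥ 3, let R = ℂ[x₁,…,x_n, y₁,…,y_n] / ⟨∑_{i=1}^n x_i y_i − 1⟩, and let K be the fraction field of R, with the SL_n(ℂ)-action on R extended to K by field automorphisms. Let ν be an additive ℚ-valued valuation on K (satisfying ν(fg) = ν(f) + ν(g) and ν(f + g) ≥ min(ν(f), ν(g)), with ν(0) = ∞) such that ν(c) = 0 for every nonzero constant c ∈ ℂ^× and ν(g·f) = ν(f) for every g ∈ SL_n(ℂ) and every f ∈ K. Then ν(x̄_n) + ν(ȳ₁) ≤ 0. -/
import Mathlib


set_option synthInstance.maxHeartbeats 1000000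
set_option maxHeartbeats 1000000

open MvPolynomial

/-- The defining ideal of `ℂ[x₁,…,xₙ,y₁,…,yₙ]/⟨∑ xᵢ yᵢ − 1⟩`, where the `x` variables are
indexed by `Sum.inl` and the `y` variables by `Sum.inr`. -/
noncomputable def relIdeal (n : ℕ) : Ideal (MvPolynomial (Fin n ⊕ Fin n) ℂ) :=
  Ideal.span {(∑ i : Fin n, X (Sum.inl i) * X (Sum.inr i)) - 1}

/-- The coordinate ring `R = ℂ[x₁,…,xₙ,y₁,…,yₙ]/⟨∑ xᵢ yᵢ − 1⟩` of `SL_n(ℂ)/SL_{n-1}(ℂ)`. -/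
noncomputable abbrev Rn (n : ℕ) := MvPolynomial (Fin n ⊕ Fin n) ℂ ⧸ relIdeal n

/-- The substitution action of `g ∈ SL_n(ℂ)` on the polynomial ring: `g · x_j = ∑ i (g⁻¹)_{ji} x_i`
and `g · y_j = ∑ i (gᵀ)_{ji} y_i`, induced by the action `A · (v, w) = (A v, (Aᵀ)⁻¹ w)`
via `(g · f)(v, w) = f(g⁻¹ · (v, w))`. -/
noncomputable def slAct (n : ℕ) (g : Matrix.SpecialLinearGroup (Fin n) ℂ) :
    MvPolynomial (Fin n ⊕ Fin n) ℂ →ₐ[ℂ] MvPolynomial (Fin n ⊕ Fin n) ℂ :=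
  aeval (fun v => match v with
    | Sum.inl j => ∑ i : Fin n, (g.val⁻¹ j i) • X (Sum.inl i)
    | Sum.inr j => ∑ i : Fin n, (g.val i j) • X (Sum.inr i))

/-- The image of a polynomial in the fraction field `K` of `R`. -/
noncomputable def toK (n : ℕ) (p : MvPolynomial (Fin n ⊕ Fin n) ℂ) : FractionRing (Rn n) :=
  algebraMap (Rn n) (FractionRing (Rn n)) (Ideal.Quotient.mk (relIdeal n) p)

/-! ### Auxiliary lemmas -/

lemma toK_add (n : ℕ) (p q : MvPolynomial (Fin n ⊕ Fin n) ℂ) :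
    toK n (p + q) = toK n p + toK n q := by simp [toK, map_add]

lemma toK_mul (n : ℕ) (p q : MvPolynomial (Fin n ⊕ Fin n) ℂ) :
    toK n (p * q) = toK n p * toK n q := by simp [toK, map_mul]

/-- Nonvanishing in `K` via evaluation at a point of the variety. -/
lemma toK_ne_zero (n : ℕ) (p : MvPolynomial (Fin n ⊕ Fin n) ℂ)
    (x : (Fin n ⊕ Fin n) → ℂ)
    (hx : (∑ i : Fin n, x (Sum.inl i) * x (Sum.inr i)) = 1)
    (hp : eval x p ≠ 0) : toK n p ≠ 0 := by
  intro h
  have hinj : Function.Injective (algebraMap (Rn n) (FractionRing (Rn n))) :=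
    IsLocalization.injective _ (le_refl (nonZeroDivisors (Rn n)))
  have h0 : Ideal.Quotient.mk (relIdeal n) p = 0 := by
    apply hinj
    simpa [toK] using h
  have hmem : p ∈ relIdeal n := (Ideal.Quotient.eq_zero_iff_mem).mp h0
  obtain ⟨q, hq⟩ := Ideal.mem_span_singleton'.mp hmem
  apply hp
  rw [← hq, map_mul, map_sub, map_sum]
  simp [hx]

/-- The point `x = y = e_a` on the variety. -/
noncomputable def pt (n : ℕ) (a : Fin n) : (Fin n ⊕ Fin n) → ℂ :=
  fun v => match v with
  | Sum.inl j => if j = a then 1 else 0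
  | Sum.inr j => if j = a then 1 else 0

lemma pt_rel (n : ℕ) (a : Fin n) :
    (∑ i : Fin n, pt n a (Sum.inl i) * pt n a (Sum.inr i)) = 1 := by
  simp [pt]

lemma pt_sum (n : ℕ) (a : Fin n) (s : Finset (Fin n)) (ha : a ∈ s) :
    eval (pt n a) (∑ i ∈ s, X (Sum.inl i) * X (Sum.inr i)) = 1 := by
  simp [pt, Finset.sum_ite_eq', ha]

/-! ### Signed transposition matrices in `SL_n` -/

noncomputable def swapD (n : ℕ) (a : Fin n) : Matrix (Fin n) (Fin n) ℂ :=
  Matrix.diagonal (fun k => if k = a then -1 else 1)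

noncomputable def swapM (n : ℕ) (a b : Fin n) : Matrix (Fin n) (Fin n) ℂ :=
  (Equiv.swap a b).permMatrix ℂ * swapD n a

lemma swapD_sq (n : ℕ) (a : Fin n) : swapD n a * swapD n a = 1 := by
  rw [swapD, Matrix.diagonal_mul_diagonal]
  have : (fun k => (if k = a then (-1:ℂ) else 1) * (if k = a then -1 else 1)) =
      fun _ => 1 := by
    funext k; split_ifs <;> norm_num
  rw [this, Matrix.diagonal_one]

lemma permMatrix_sq (n : ℕ) (a b : Fin n) :
    (Equiv.swap a b).permMatrix ℂ * (Equiv.swap a b).permMatrix ℂ = 1 := by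
  rw [Equiv.Perm.permMatrix, ← PEquiv.toMatrix_trans, ← Equiv.toPEquiv_trans,
    Equiv.swap_swap, Equiv.toPEquiv_refl, PEquiv.toMatrix_refl]

lemma swapM_det (n : ℕ) (a b : Fin n) (hab : a ≠ b) : (swapM n a b).det = 1 := by
  rw [swapM, Matrix.det_mul, Matrix.det_permutation, Equiv.Perm.sign_swap hab,
    swapD, Matrix.det_diagonal]
  rw [Finset.prod_ite_eq' Finset.univ a (fun _ => (-1:ℂ))]
  simp

noncomputable def swapSL (n : ℕ) (a b : Fin n) (hab : a ≠ b) :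
    Matrix.SpecialLinearGroup (Fin n) ℂ := ⟨swapM n a b, swapM_det n a b hab⟩

lemma swapSL_inv (n : ℕ) (a b : Fin n) (hab : a ≠ b) :
    (swapSL n a b hab).val⁻¹ = swapD n a * (Equiv.swap a b).permMatrix ℂ := by
  apply Matrix.inv_eq_right_inv
  show swapM n a b * _ = 1
  rw [swapM, Matrix.mul_assoc, ← Matrix.mul_assoc (swapD n a), swapD_sq,
    Matrix.one_mul, permMatrix_sq]

lemma slAct_inl (n : ℕ) (a b : Fin n) (hab : a ≠ b) :
    slAct n (swapSL n a b hab) (X (Sum.inl b)) = X (Sum.inl a) := by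
  rw [slAct, aeval_X]
  show ∑ i : Fin n, ((swapSL n a b hab).val⁻¹ b i) • X (Sum.inl i) = X (Sum.inl a)
  rw [swapSL_inv]
  rw [Finset.sum_eq_single a]
  · rw [swapD, Matrix.diagonal_mul]
    simp [PEquiv.toMatrix_apply, Equiv.toPEquiv, hab.symm]
  · intro k _ hk
    rw [swapD, Matrix.diagonal_mul]
    have : Equiv.swap a b b = a := Equiv.swap_apply_right a b
    simp [PEquiv.toMatrix_apply, Equiv.toPEquiv, this, hk.symm]
  · intro h; exact absurd (Finset.mem_univ a) h

lemma slAct_inr (n : ℕ) (a b : Fin n) (hab : a ≠ b) :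
    slAct n (swapSL n a b hab) (X (Sum.inr b)) = X (Sum.inr a) := by
  rw [slAct, aeval_X]
  show ∑ i : Fin n, ((swapSL n a b hab).val i b) • X (Sum.inr i) = X (Sum.inr a)
  show ∑ i : Fin n, (swapM n a b i b) • X (Sum.inr i) = X (Sum.inr a)
  rw [Finset.sum_eq_single a]
  · rw [swapM, swapD, Matrix.mul_diagonal]
    simp [PEquiv.toMatrix_apply, Equiv.toPEquiv, hab, Ne.symm hab]
  · intro k _ hk
    rw [swapM, swapD, Matrix.mul_diagonal]
    have hne : Equiv.swap a b k ≠ b := by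
      intro h
      exact hk (by simpa using congrArg (Equiv.swap a b) h)
    simp [PEquiv.toMatrix_apply, Equiv.toPEquiv, Ne.symm hne, Ne.symm hab, hne]
  · intro h; exact absurd (Finset.mem_univ a) h

/-- Key valuation estimate: some term of the sum has valuation at most that of the sum. -/
lemma key_sum (n : ℕ) (ν : FractionRing (Rn n) → ℚ)
    (hadd : ∀ f g : FractionRing (Rn n), f ≠ 0 → g ≠ 0 → f + g ≠ 0 →
      min (ν f) (ν g) ≤ ν (f + g)) :
    ∀ s : Finset (Fin n), s.Nonempty →
      ∃ a ∈ s, ν (toK n (X (Sum.inl a) * X (Sum.inr a))) ≤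
        ν (toK n (∑ i ∈ s, X (Sum.inl i) * X (Sum.inr i))) := by
  intro s
  induction s using Finset.induction_on with
  | empty => intro h; simp at h
  | @insert a s ha ih =>
    intro _
    by_cases hs : s.Nonempty
    · obtain ⟨c, hc, hcle⟩ := ih hs
      have hta : toK n (X (Sum.inl a) * X (Sum.inr a)) ≠ 0 :=
        toK_ne_zero n _ (pt n a) (pt_rel n a) (by simp [pt])
      have hts : toK n (∑ i ∈ s, X (Sum.inl i) * X (Sum.inr i)) ≠ 0 :=
        toK_ne_zero n _ (pt n c) (pt_rel n c) (by rw [pt_sum n c s hc]; norm_num)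
      have htins : toK n (∑ i ∈ insert a s, X (Sum.inl i) * X (Sum.inr i)) ≠ 0 :=
        toK_ne_zero n _ (pt n a) (pt_rel n a)
          (by rw [pt_sum n a _ (Finset.mem_insert_self a s)]; norm_num)
      have hsum : toK n (∑ i ∈ insert a s, X (Sum.inl i) * X (Sum.inr i)) =
          toK n (X (Sum.inl a) * X (Sum.inr a)) +
            toK n (∑ i ∈ s, X (Sum.inl i) * X (Sum.inr i)) := by
        rw [← toK_add, Finset.sum_insert ha]
      have hmin := hadd _ _ hta hts (by rw [← hsum]; exact htins)
      rw [← hsum] at hmin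
      rcases le_total (ν (toK n (X (Sum.inl a) * X (Sum.inr a))))
        (ν (toK n (∑ i ∈ s, X (Sum.inl i) * X (Sum.inr i)))) with h | h
      · exact ⟨a, Finset.mem_insert_self a s, by rw [min_eq_left h] at hmin; exact hmin⟩
      · refine ⟨c, Finset.mem_insert_of_mem hc, ?_⟩
        rw [min_eq_right h] at hmin
        exact le_trans hcle hmin
    · rw [Finset.not_nonempty_iff_eq_empty] at hs
      subst hs
      exact ⟨a, by simp, by simp⟩

/-- Let `K` be the fraction field of `R = ℂ[x,y]/⟨∑ xᵢ yᵢ − 1⟩` and let `ν` be an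
additive `ℚ`-valued valuation on `K`, trivial on `ℂˣ`, invariant under the (extension to `K` of
the) `SL_n(ℂ)`-action. Then `ν(x̄ₙ) + ν(ȳ₁) ≤ 0`. -/
theorem stmt5 (n : ℕ) (hn : 3 ≤ n)
    (ν : FractionRing (Rn n) → ℚ)
    (hmul : ∀ f g : FractionRing (Rn n), f ≠ 0 → g ≠ 0 → ν (f * g) = ν f + ν g)
    (hadd : ∀ f g : FractionRing (Rn n), f ≠ 0 → g ≠ 0 → f + g ≠ 0 →
      min (ν f) (ν g) ≤ ν (f + g))
    (hconst : ∀ c : ℂ, c ≠ 0 →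
      ν (algebraMap (Rn n) (FractionRing (Rn n)) (algebraMap ℂ (Rn n) c)) = 0)
    (σ : Matrix.SpecialLinearGroup (Fin n) ℂ → FractionRing (Rn n) ≃+* FractionRing (Rn n))
    (hσ : ∀ (g : Matrix.SpecialLinearGroup (Fin n) ℂ) (p : MvPolynomial (Fin n ⊕ Fin n) ℂ),
      σ g (toK n p) = toK n (slAct n g p))
    (hinv : ∀ (g : Matrix.SpecialLinearGroup (Fin n) ℂ) (f : FractionRing (Rn n)),
      ν (σ g f) = ν f) :
    ν (toK n (X (Sum.inl ⟨n - 1, by omega⟩))) + ν (toK n (X (Sum.inr ⟨0, by omega⟩))) ≤ 0 := by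
  have hxlem : ∀ a b : Fin n, a ≠ b →
      ν (toK n (X (Sum.inl a))) = ν (toK n (X (Sum.inl b))) := by
    intro a b hab
    have h := hinv (swapSL n a b hab) (toK n (X (Sum.inl b)))
    rwa [hσ, slAct_inl n a b hab] at h
  have hylem : ∀ a b : Fin n, a ≠ b →
      ν (toK n (X (Sum.inr a))) = ν (toK n (X (Sum.inr b))) := by
    intro a b hab
    have h := hinv (swapSL n a b hab) (toK n (X (Sum.inr b)))
    rwa [hσ, slAct_inr n a b hab] at h
  have huniv : (Finset.univ : Finset (Fin n)).Nonempty :=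
    ⟨⟨0, by omega⟩, Finset.mem_univ _⟩
  obtain ⟨i0, -, hle⟩ := key_sum n ν hadd Finset.univ huniv
  have h1 : toK n (∑ i : Fin n, X (Sum.inl i) * X (Sum.inr i)) = 1 := by
    have hmk : Ideal.Quotient.mk (relIdeal n)
        (∑ i : Fin n, X (Sum.inl i) * X (Sum.inr i)) =
        Ideal.Quotient.mk (relIdeal n) 1 := by
      rw [Ideal.Quotient.eq]
      exact Ideal.subset_span rfl
    rw [toK, hmk, map_one, map_one]
  have hν1 : ν (1 : FractionRing (Rn n)) = 0 := by
    have h := hconst 1 one_ne_zero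
    simpa using h
  rw [h1, hν1] at hle
  have hxa : toK n (X (Sum.inl i0)) ≠ 0 :=
    toK_ne_zero n _ (pt n i0) (pt_rel n i0) (by simp [pt])
  have hya : toK n (X (Sum.inr i0)) ≠ 0 :=
    toK_ne_zero n _ (pt n i0) (pt_rel n i0) (by simp [pt])
  rw [toK_mul, hmul _ _ hxa hya] at hle
  have e1 : ν (toK n (X (Sum.inl (⟨n - 1, by omega⟩ : Fin n)))) =
      ν (toK n (X (Sum.inl i0))) := by
    rcases eq_or_ne i0 ⟨n - 1, by omega⟩ with h | h
    · rw [h]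
    · exact (hxlem i0 _ h).symm
  have e2 : ν (toK n (X (Sum.inr (⟨0, by omega⟩ : Fin n)))) =
      ν (toK n (X (Sum.inr i0))) := by
    rcases eq_or_ne i0 ⟨0, by omega⟩ with h | h
    · rw [h]
    · exact (hylem i0 _ h).symm
  rw [e1, e2]
  exact hle
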